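/- For every α > 0 and all real θ, γ: ∫_ℝ ∫_0^∞ ( e^{−xθ} e^{−y e^{−xθ}} )^{1+α} · ( (2π)^{−1/2} e^{−(x−γ)²/2} )^{1+α} dy dx = (1+α)^{−3/2} (2π)^{−α/2} exp( −αγθ + α²θ²/(2(1+α)) ). (This evaluates the first term of the minimum density power divergence objective function for the exponential regression model with a standard-normal covariate.) -/

import Mathlib

open MeasureTheory Real

lemma my_integral_exp_neg_mul_Ioi {s : ℝ} (hs : 0 < s) :
    ∫ y in Set.Ioi (0 : ℝ), Real.exp (-(s * y)) = s⁻¹ := by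
  have h := integral_comp_mul_left_Ioi (fun y => Real.exp (-y)) 0 hs
  simp only [mul_zero, integral_exp_neg_Ioi_zero, smul_eq_mul, mul_one] at h
  simpa using h

lemma my_integral_rexp_quadratic {b : ℝ} (hb : b < 0) (c d : ℝ) :
    ∫ x : ℝ, Real.exp (b * x ^ 2 + c * x + d)
      = Real.sqrt (π / -b) * Real.exp (d - c ^ 2 / (4 * b)) := by
  have hb' : ((b : ℂ)).re < 0 := by simpa using hb
  have hpb : (0 : ℝ) ≤ π / -b := div_nonneg pi_pos.le (by linarith)
  have h := integral_cexp_quadratic hb' (c : ℂ) (d : ℂ)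
  have h1 : ∫ x : ℝ, Complex.exp ((b : ℂ) * x ^ 2 + c * x + d)
      = ∫ x : ℝ, ((Real.exp (b * x ^ 2 + c * x + d) : ℝ) : ℂ) := by
    congr 1; ext x
    rw [Complex.ofReal_exp]
    push_cast
    ring_nf
  have h2 : (∫ x : ℝ, ((Real.exp (b * x ^ 2 + c * x + d) : ℝ) : ℂ))
      = ((∫ x : ℝ, Real.exp (b * x ^ 2 + c * x + d) : ℝ) : ℂ) := integral_ofReal
  rw [h1, h2,
    show ((π : ℂ) / -(b : ℂ)) = ((π / -b : ℝ) : ℂ) by push_cast; ring,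
    show (1 / 2 : ℂ) = ((1 / 2 : ℝ) : ℂ) by norm_num,
    ← Complex.ofReal_cpow hpb,
    show ((d : ℂ) - (c : ℂ) ^ 2 / (4 * b)) = ((d - c ^ 2 / (4 * b) : ℝ) : ℂ) by push_cast; ring,
    ← Complex.ofReal_exp, ← Complex.ofReal_mul] at h
  rw [Real.sqrt_eq_rpow]
  exact_mod_cast h

theorem mdpde_first_term_exponential_regression (α θ γ : ℝ) (hα : 0 < α) :
    (∫ x : ℝ, ∫ y in Set.Ioi (0 : ℝ),
        (Real.exp (-(x * θ)) * Real.exp (-(y * Real.exp (-(x * θ))))) ^ (1 + α) *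
          ((2 * π) ^ (-(1 : ℝ) / 2) * Real.exp (-((x - γ) ^ 2) / 2)) ^ (1 + α))
      = (1 + α) ^ (-(3 : ℝ) / 2) * (2 * π) ^ (-α / 2) *
          Real.exp (-(α * γ * θ) + α ^ 2 * θ ^ 2 / (2 * (1 + α))) := by
  have h1α : (0 : ℝ) < 1 + α := by linarith
  have h2π : (0 : ℝ) < 2 * π := by positivity
  have key : ∀ x : ℝ, (∫ y in Set.Ioi (0 : ℝ),
      (Real.exp (-(x * θ)) * Real.exp (-(y * Real.exp (-(x * θ))))) ^ (1 + α) *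
        ((2 * π) ^ (-(1 : ℝ) / 2) * Real.exp (-((x - γ) ^ 2) / 2)) ^ (1 + α))
      = ((1 + α)⁻¹ * (2 * π) ^ (-(1 + α) / 2)) *
        Real.exp ((-((1 + α) / 2)) * x ^ 2 + ((1 + α) * γ - α * θ) * x +
          (-((1 + α) * γ ^ 2 / 2))) := by
    intro x
    have hb : 0 < Real.exp (-(x * θ)) := Real.exp_pos _
    have hC : ((2 * π) ^ (-(1 : ℝ) / 2) * Real.exp (-((x - γ) ^ 2) / 2)) ^ (1 + α)
        = (2 * π) ^ (-(1 + α) / 2) * Real.exp (-((x - γ) ^ 2) / 2 * (1 + α)) := by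
      rw [Real.mul_rpow (by positivity) (Real.exp_pos _).le, ← Real.rpow_mul h2π.le,
        ← Real.exp_mul]
      ring_nf
    have hint : ∀ y : ℝ,
        (Real.exp (-(x * θ)) * Real.exp (-(y * Real.exp (-(x * θ))))) ^ (1 + α) *
          ((2 * π) ^ (-(1 : ℝ) / 2) * Real.exp (-((x - γ) ^ 2) / 2)) ^ (1 + α)
        = Real.exp (-(((1 + α) * Real.exp (-(x * θ))) * y)) *
            (Real.exp (-(x * θ)) ^ (1 + α) *
              ((2 * π) ^ (-(1 + α) / 2) * Real.exp (-((x - γ) ^ 2) / 2 * (1 + α)))) := by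
      intro y
      rw [Real.mul_rpow hb.le (Real.exp_pos _).le, hC]
      simp only [← Real.exp_mul]
      rw [show -(y * Real.exp (-(x * θ))) * (1 + α)
          = -(((1 + α) * Real.exp (-(x * θ))) * y) by ring]
      ring
    simp_rw [hint]
    rw [integral_mul_const, my_integral_exp_neg_mul_Ioi (by positivity),
      Real.rpow_add hb, Real.rpow_one, ← Real.exp_mul]
    have hE : (Real.exp (-(x * θ)))⁻¹ = Real.exp (x * θ) := by
      rw [← Real.exp_neg, neg_neg]
    have hexp : Real.exp (x * θ) * (Real.exp (-(x * θ)) * Real.exp (-(x * θ) * α) *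
          Real.exp (-((x - γ) ^ 2) / 2 * (1 + α)))
        = Real.exp ((-((1 + α) / 2)) * x ^ 2 + ((1 + α) * γ - α * θ) * x +
            (-((1 + α) * γ ^ 2 / 2))) := by
      rw [← Real.exp_add, ← Real.exp_add, ← Real.exp_add]
      congr 1; ring
    rw [mul_inv, hE, ← hexp]
    ring
  simp_rw [key]
  rw [integral_const_mul, my_integral_rexp_quadratic (show -((1 + α) / 2) < 0 by linarith)]
  have harg : -((1 + α) * γ ^ 2 / 2) - ((1 + α) * γ - α * θ) ^ 2 / (4 * -((1 + α) / 2))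
      = -(α * γ * θ) + α ^ 2 * θ ^ 2 / (2 * (1 + α)) := by
    have hne : (1 + α : ℝ) ≠ 0 := h1α.ne'
    rw [show (4 : ℝ) * -((1 + α) / 2) = -(2 * (1 + α)) by ring, div_neg]
    field_simp
    ring
  have hs : Real.sqrt (π / - -((1 + α) / 2)) = (2 * π) ^ ((1 : ℝ) / 2) * ((1 + α) ^ ((1 : ℝ) / 2))⁻¹ := by
    rw [neg_neg, show π / ((1 + α) / 2) = (2 * π) / (1 + α) by field_simp,
      Real.sqrt_eq_rpow, Real.div_rpow h2π.le h1α.le, div_eq_mul_inv]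
  have hc1 : ((1 + α) : ℝ)⁻¹ * ((1 + α) ^ ((1 : ℝ) / 2))⁻¹ = (1 + α) ^ (-(3 : ℝ) / 2) := by
    rw [← Real.rpow_neg_one, ← Real.rpow_neg h1α.le, ← Real.rpow_add h1α]
    norm_num
  have hc2 : (2 * π) ^ (-(1 + α) / 2) * (2 * π) ^ ((1 : ℝ) / 2) = (2 * π) ^ (-α / 2) := by
    rw [← Real.rpow_add h2π]; congr 1; ring
  rw [harg, hs, ← hc1, ← hc2]
  ring
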